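/- Let A and B be join-semilattices with zero. The map ε sending ξ ∈ Hom(⟨A∖{0}; ∨⟩, ⟨Id B; ∩⟩) to ε(ξ) = {⟨a,b⟩ ∈ (A∖{0}) × (B∖{0}) : b ∈ ξ(a)} ∪ ∇ is an order isomorphism between the poset of semilattice homomorphisms from ⟨A∖{0}, ∨⟩ to ⟨Id B, ∩⟩ (ordered pointwise) and the lattice of bi-ideals of A × B ordered by inclusion. -/

import Mathlib

/-- `∇ = (A × {0}) ∪ ({0} × B)`. -/
def nabla (A B : Type*) [SemilatticeSup A] [OrderBot A] [SemilatticeSup B] [OrderBot B] :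
    Set (A × B) :=
  {p | p.2 = ⊥} ∪ {p | p.1 = ⊥}

/-- A bi-ideal of `A × B`: a nonempty, downward closed subset containing `∇` and closed
under lateral joins. -/
def IsBiIdeal {A B : Type*} [SemilatticeSup A] [OrderBot A] [SemilatticeSup B] [OrderBot B]
    (I : Set (A × B)) : Prop :=
  I.Nonempty ∧ (∀ ⦃p⦄, p ∈ I → ∀ ⦃q⦄, q ≤ p → q ∈ I) ∧ nabla A B ⊆ I ∧
    ∀ ⦃p q : A × B⦄, p ∈ I → q ∈ I → (p.1 = q.1 ∨ p.2 = q.2) → p ⊔ q ∈ I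
variable {A B : Type*} [SemilatticeSup A] [OrderBot A] [SemilatticeSup B] [OrderBot B]

/-- `A⁻ = A ∖ {0}` is a join-subsemilattice of `A`. -/
instance : SemilatticeSup {a : A // a ≠ ⊥} :=
  Subtype.semilatticeSup fun {x _} hx _ h => hx (le_bot_iff.mp (h ▸ le_sup_left))

/-- `ξ : A⁻ → Id B` is a homomorphism from `⟨A⁻; ∨⟩` to `⟨Id B; ∩⟩`. -/
def IsTensHom (ξ : {a : A // a ≠ ⊥} → Order.Ideal B) : Prop :=
  ∀ a₀ a₁ : {a : A // a ≠ ⊥}, (ξ (a₀ ⊔ a₁) : Set B) = ↑(ξ a₀) ∩ ↑(ξ a₁)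

/-- The map `ε`. -/
def eps (ξ : {a : A // a ≠ ⊥} → Order.Ideal B) : Set (A × B) :=
  {p | ∃ h : p.1 ≠ ⊥, p.2 ≠ ⊥ ∧ p.2 ∈ ξ ⟨p.1, h⟩} ∪ nabla A B

/-- `ε` is an order isomorphism from the pointwise-ordered set of homomorphisms
`⟨A⁻; ∨⟩ → ⟨Id B; ∩⟩` onto the set of bi-ideals of `A × B` ordered by inclusion. -/
theorem eps_orderIso :
    (∀ ξ : {a : A // a ≠ ⊥} → Order.Ideal B, IsTensHom ξ → IsBiIdeal (eps ξ)) ∧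
    (∀ ξ η : {a : A // a ≠ ⊥} → Order.Ideal B, IsTensHom ξ → IsTensHom η →
      ((∀ a, (ξ a : Set B) ⊆ ↑(η a)) ↔ eps ξ ⊆ eps η)) ∧
    (∀ I : Set (A × B), IsBiIdeal I →
      ∃ ξ : {a : A // a ≠ ⊥} → Order.Ideal B, IsTensHom ξ ∧ eps ξ = I) := by
  have anti : ∀ (ξ : {a : A // a ≠ ⊥} → Order.Ideal B), IsTensHom ξ →
      ∀ {a a' : {a : A // a ≠ ⊥}}, a ≤ a' → (ξ a' : Set B) ⊆ ξ a := by
    intro ξ hξ a a' h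
    have := hξ a a'
    rw [sup_eq_right.mpr h] at this
    rw [this]; exact Set.inter_subset_left
  refine ⟨?_, ?_, ?_⟩
  · -- eps ξ is a bi-ideal
    intro ξ hξ
    refine ⟨⟨(⊥, ⊥), Or.inr (Or.inl rfl)⟩, ?_, fun p hp => Or.inr hp, ?_⟩
    · -- downward closed
      rintro ⟨a, b⟩ hp ⟨a', b'⟩ ⟨h1, h2⟩
      by_cases hb' : b' = ⊥
      · exact Or.inr (Or.inl hb')
      by_cases ha' : a' = ⊥
      · exact Or.inr (Or.inr ha')
      rcases hp with ⟨ha, hb, hmem⟩ | hb | ha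
      · refine Or.inl ⟨ha', hb', ?_⟩
        exact (ξ ⟨a', ha'⟩).lower h2 (anti ξ hξ (show (⟨a', ha'⟩ : {a : A // a ≠ ⊥}) ≤ ⟨a, ha⟩ from h1) hmem)
      · exact absurd (le_bot_iff.mp (hb ▸ h2)) hb'
      · exact absurd (le_bot_iff.mp (ha ▸ h1)) ha'
    · -- lateral joins
      rintro ⟨a, b⟩ ⟨a', b'⟩ hp hq (h | h) <;> simp only at h <;> subst h
      · -- same first coordinate
        by_cases ha : a = ⊥
        · exact Or.inr (Or.inr (by simp [Prod.fst, ha]))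
        by_cases hbb : b ⊔ b' = ⊥
        · exact Or.inr (Or.inl hbb)
        have hb : b ∈ ξ ⟨a, ha⟩ := by
          rcases hp with ⟨h1, h2, h3⟩ | h | h
          · exact h3
          · subst h; exact (ξ _).bot_mem
          · exact absurd h ha
        have hb' : b' ∈ ξ ⟨a, ha⟩ := by
          rcases hq with ⟨h1, h2, h3⟩ | h | h
          · exact h3
          · subst h; exact (ξ _).bot_mem
          · exact absurd h ha
        have heq : (a, b) ⊔ (a, b') = (a, b ⊔ b') := by simp [Prod.sup_def]
        rw [heq]
        exact Or.inl ⟨ha, hbb, Order.Ideal.sup_mem hb hb'⟩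
      · -- same second coordinate (b' renamed: p = (a,b'), q = (a',b'))
        rename_i b
        by_cases hb : b = ⊥
        · exact Or.inr (Or.inl (by simp [Prod.sup_def, hb]))
        by_cases ha : a = ⊥
        · have : (a, b) ⊔ (a', b) = (a', b) := by simp [Prod.sup_def, ha]
          rw [this]; exact hq
        by_cases ha' : a' = ⊥
        · have : (a, b) ⊔ (a', b) = (a, b) := by simp [Prod.sup_def, ha']
          rw [this]; exact hp
        have hp' : b ∈ ξ ⟨a, ha⟩ := by
          rcases hp with ⟨h1, h2, h3⟩ | h | h
          · exact h3
          · exact absurd h hb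
          · exact absurd h ha
        have hq' : b ∈ ξ ⟨a', ha'⟩ := by
          rcases hq with ⟨h1, h2, h3⟩ | h | h
          · exact h3
          · exact absurd h hb
          · exact absurd h ha'
        have haa' : a ⊔ a' ≠ ⊥ := fun h => ha (le_bot_iff.mp (h ▸ le_sup_left))
        have key := hξ ⟨a, ha⟩ ⟨a', ha'⟩
        have : (⟨a, ha⟩ ⊔ ⟨a', ha'⟩ : {a : A // a ≠ ⊥}) = ⟨a ⊔ a', haa'⟩ := rfl
        rw [this] at key
        have hsup : (a, b) ⊔ (a', b) = (a ⊔ a', b) := by simp [Prod.sup_def]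
        rw [hsup]
        refine Or.inl ⟨haa', hb, ?_⟩
        show b ∈ (ξ ⟨a ⊔ a', haa'⟩ : Set B)
        rw [key]
        exact ⟨hp', hq'⟩
  · -- order embedding
    intro ξ η hξ hη
    constructor
    · rintro h ⟨a, b⟩ (⟨ha, hb, hmem⟩ | hp)
      · exact Or.inl ⟨ha, hb, h ⟨a, ha⟩ hmem⟩
      · exact Or.inr hp
    · intro h a b hb
      by_cases hb' : b = ⊥
      · subst hb'; exact (η a).lower bot_le (η a).nonempty.choose_spec
      have : ((a : A), b) ∈ eps ξ := Or.inl ⟨a.2, hb', by simpa using hb⟩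
      rcases h this with ⟨h1, h2, h3⟩ | h1 | h1
      · simpa using h3
      · exact absurd h1 hb'
      · exact absurd h1 a.2
  · -- surjectivity
    intro I hI
    obtain ⟨hne, hdown, hnab, hlat⟩ := hI
    set ξ : {a : A // a ≠ ⊥} → Order.Ideal B := fun a =>
      { carrier := {b | ((a : A), b) ∈ I}
        lower' := fun b c hcb hb => hdown hb ⟨le_refl _, hcb⟩
        nonempty' := ⟨⊥, hnab (Or.inl rfl)⟩
        directed' := fun b hb c hc => ⟨b ⊔ c, by
          have := hlat hb hc (Or.inl rfl)
          simpa [Prod.sup_def] using this, le_sup_left, le_sup_right⟩ } with hξdef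
    have hmem : ∀ (a : {a : A // a ≠ ⊥}) (b : B), b ∈ ξ a ↔ ((a : A), b) ∈ I := by
      intro a b; rfl
    refine ⟨ξ, ?_, ?_⟩
    · intro a₀ a₁
      ext b
      simp only [SetLike.mem_coe, hmem, Set.mem_inter_iff]
      constructor
      · intro h
        exact ⟨hdown h ⟨le_sup_left, le_refl _⟩, hdown h ⟨le_sup_right, le_refl _⟩⟩
      · rintro ⟨h0, h1⟩
        have := hlat h0 h1 (Or.inr rfl)
        exact (by simpa [Prod.sup_def] using this : ((a₀ : A) ⊔ ↑a₁, b) ∈ I)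
    · ext ⟨a, b⟩
      constructor
      · rintro (⟨ha, hb, h3⟩ | h | h)
        · exact h3
        · exact hnab (Or.inl h)
        · exact hnab (Or.inr h)
      · intro hab
        by_cases hb : b = ⊥
        · exact Or.inr (Or.inl hb)
        by_cases ha : a = ⊥
        · exact Or.inr (Or.inr ha)
        · exact Or.inl ⟨ha, hb, hab⟩
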